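/- Let L and K be De Morgan algebras defined on algebraic lattices and let φ be an order-isomorphism from the poset of completely join-irreducible elements of L onto that of K satisfying φ(j*) = φ(j)* for all completely join-irreducible j. Then the map Φ(x) = ⋁ φ(J(x)), where J(x) is the set of completely join-irreducible elements below x, is an isomorphism of De Morgan algebras (a lattice isomorphism commuting with c). -/

import Mathlib

def CompletelyJoinIrreducible {A : Type*} [CompleteLattice A] (j : A) : Prop :=
  ∀ S : Set A, j = sSup S → j ∈ S

def star {A : Type*} [CompleteLattice A] (c : A → A) (j : A) : A :=
  sInf {x : A | ¬ x ≤ c j}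

section Aux

variable {A : Type*} [CompleteLattice A]

theorem dm_le_c_iff (c : A → A) (hinv : ∀ x, c (c x) = x)
    (hanti : ∀ x y : A, x ≤ y ↔ c y ≤ c x) (x y : A) : x ≤ c y ↔ y ≤ c x := by
  rw [hanti x (c y), hinv]

theorem dm_c_sInf (c : A → A) (hinv : ∀ x, c (c x) = x)
    (hanti : ∀ x y : A, x ≤ y ↔ c y ≤ c x) (S : Set A) :
    c (sInf S) = sSup (c '' S) := by
  apply le_antisymm
  · rw [hanti (c (sInf S)) (sSup (c '' S)), hinv]
    apply le_sInf
    intro s hs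
    have h := (hanti (c s) (sSup (c '' S))).mp (le_sSup ⟨s, hs, rfl⟩)
    rwa [hinv] at h
  · apply sSup_le
    rintro _ ⟨s, hs, rfl⟩
    exact (hanti _ _).mp (sInf_le hs)

theorem dm_c_sSup (c : A → A) (hinv : ∀ x, c (c x) = x)
    (hanti : ∀ x y : A, x ≤ y ↔ c y ≤ c x) (S : Set A) :
    c (sSup S) = sInf (c '' S) := by
  apply le_antisymm
  · apply le_sInf
    rintro _ ⟨s, hs, rfl⟩
    exact (hanti _ _).mp (le_sSup hs)
  · rw [hanti (sInf (c '' S)) (c (sSup S)), hinv]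
    apply sSup_le
    intro s hs
    exact (dm_le_c_iff c hinv hanti _ _).mp (sInf_le ⟨s, hs, rfl⟩)

/-- Every element of a compactly generated lattice is the meet of the
completely meet-irreducible elements above it. -/
theorem dm_meet_gen [IsCompactlyGenerated A] (x : A) :
    x = sInf {m : A | (∀ S : Set A, m = sInf S → m ∈ S) ∧ x ≤ m} := by
  refine le_antisymm (le_sInf fun m hm => hm.2) ?_
  rw [le_iff_compact_le_imp]
  intro k hk hkle
  by_contra hkx
  have hchain : ∀ C ⊆ {z : A | x ≤ z ∧ ¬ k ≤ z}, IsChain (· ≤ ·) C →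
      ∀ y ∈ C, ∃ ub ∈ {z : A | x ≤ z ∧ ¬ k ≤ z}, ∀ z ∈ C, z ≤ ub := by
    intro C hCsub hC y hy
    refine ⟨sSup C, ⟨(hCsub hy).1.trans (le_sSup hy), ?_⟩, fun z hz => le_sSup hz⟩
    intro hkC
    obtain ⟨z, hzC, hkz⟩ :=
      (CompleteLattice.isCompactElement_iff_le_of_directed_sSup_le A k).mp hk C ⟨y, hy⟩
        hC.directedOn hkC
    exact (hCsub hzC).2 hkz
  obtain ⟨m, hxm, hm⟩ := zorn_le_nonempty₀ {z : A | x ≤ z ∧ ¬ k ≤ z} hchain x ⟨le_rfl, hkx⟩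
  have hcmi : ∀ S : Set A, m = sInf S → m ∈ S := by
    intro S hS
    by_contra hmS
    have hks : ∀ s ∈ S, k ≤ s := by
      intro s hsS
      by_contra hksn
      have hms : m ≤ s := hS ▸ sInf_le hsS
      have hsm := hm.2 ⟨hm.1.1.trans hms, hksn⟩ hms
      exact hmS (le_antisymm hms hsm ▸ hsS)
    exact hm.1.2 (hS ▸ le_sInf hks)
  exact hm.1.2 (hkle.trans (sInf_le ⟨hcmi, hm.1.1⟩))

/-- Every element is the join of the completely join-irreducible elements below it,
given an antitone involution. -/
theorem dm_join_gen [IsCompactlyGenerated A] (c : A → A) (hinv : ∀ x, c (c x) = x)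
    (hanti : ∀ x y : A, x ≤ y ↔ c y ≤ c x) (x : A) :
    x = sSup {j : A | CompletelyJoinIrreducible j ∧ j ≤ x} := by
  have key := dm_meet_gen (c x)
  have h1 : x = sSup (c '' {m : A | (∀ S : Set A, m = sInf S → m ∈ S) ∧ c x ≤ m}) := by
    conv_lhs => rw [← hinv x, key]
    exact dm_c_sInf c hinv hanti _
  refine le_antisymm ?_ (sSup_le fun j hj => hj.2)
  conv_lhs => rw [h1]
  apply sSup_le_sSup
  rintro _ ⟨m, ⟨hmi, hxm⟩, rfl⟩
  constructor
  · intro S hS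
    have hmS : m = sInf (c '' S) := by
      rw [← hinv m, hS, dm_c_sSup c hinv hanti]
    obtain ⟨s, hsS, hsm⟩ := hmi (c '' S) hmS
    have hcm : c m = s := by rw [← hsm, hinv]
    exact hcm ▸ hsS
  · have h := (hanti (c x) m).mp hxm
    rwa [hinv] at h

theorem dm_cji_compact [IsCompactlyGenerated A] {j : A}
    (hj : CompletelyJoinIrreducible j) : IsCompactElement j := by
  obtain ⟨s, hs, hsup⟩ := IsCompactlyGenerated.exists_sSup_eq j
  exact hs j (hj s hsup.symm)

/-- Completely join-irreducible elements are completely join-prime. -/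
theorem dm_cji_prime [IsCompactlyGenerated A]
    (hdist : ∀ x y z : A, x ⊓ (y ⊔ z) = (x ⊓ y) ⊔ (x ⊓ z)) {j : A}
    (hj : CompletelyJoinIrreducible j) {S : Set A} (h : j ≤ sSup S) :
    ∃ s ∈ S, j ≤ s := by
  classical
  obtain ⟨t, htS, htle⟩ :=
    (CompleteLattice.isCompactElement_iff_exists_le_sSup_of_le_sSup A j).mp (dm_cji_compact hj) S h
  have hsup : ∀ u : Finset A, j ⊓ u.sup id = u.sup (fun s => j ⊓ s) := by
    intro u
    induction u using Finset.induction with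
    | empty => simp
    | insert _ _ hmem ih => rw [Finset.sup_insert, Finset.sup_insert, hdist, ih]; rfl
  have h1 : j = t.sup (fun s => j ⊓ s) := by
    rw [← hsup t]; exact (inf_eq_left.mpr htle).symm
  have h3 : sSup ((fun s => j ⊓ s) '' (↑t : Set A)) = t.sup (fun s => j ⊓ s) := by
    rw [← Finset.coe_image, ← Finset.sup_id_eq_sSup, Finset.sup_image]
    rfl
  have h2 : j = sSup ((fun s => j ⊓ s) '' (↑t : Set A)) := by rw [h3, ← h1]
  obtain ⟨s, hst, hjs⟩ := hj _ h2
  exact ⟨s, htS hst, inf_eq_left.mp hjs⟩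

/-- `c j` is completely meet-prime for completely join-irreducible `j`. -/
theorem dm_cmi_prime [IsCompactlyGenerated A]
    (hdist : ∀ x y z : A, x ⊓ (y ⊔ z) = (x ⊓ y) ⊔ (x ⊓ z))
    (c : A → A) (hinv : ∀ x, c (c x) = x) (hanti : ∀ x y : A, x ≤ y ↔ c y ≤ c x)
    {j : A} (hj : CompletelyJoinIrreducible j) {S : Set A} (h : sInf S ≤ c j) :
    ∃ s ∈ S, s ≤ c j := by
  have h1 : j ≤ sSup (c '' S) := by
    rw [← dm_c_sInf c hinv hanti]
    exact (dm_le_c_iff c hinv hanti _ _).mp h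
  obtain ⟨_, ⟨s, hsS, rfl⟩, hjs⟩ := dm_cji_prime hdist hj h1
  exact ⟨s, hsS, (dm_le_c_iff c hinv hanti _ _).mp hjs⟩

theorem dm_star_not_le [IsCompactlyGenerated A]
    (hdist : ∀ x y z : A, x ⊓ (y ⊔ z) = (x ⊓ y) ⊔ (x ⊓ z))
    (c : A → A) (hinv : ∀ x, c (c x) = x) (hanti : ∀ x y : A, x ≤ y ↔ c y ≤ c x)
    {j : A} (hj : CompletelyJoinIrreducible j) : ¬ star c j ≤ c j := by
  intro h
  obtain ⟨s, hs, hsle⟩ := dm_cmi_prime hdist c hinv hanti hj h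
  exact hs hsle

theorem dm_star_le_iff [IsCompactlyGenerated A]
    (hdist : ∀ x y z : A, x ⊓ (y ⊔ z) = (x ⊓ y) ⊔ (x ⊓ z))
    (c : A → A) (hinv : ∀ x, c (c x) = x) (hanti : ∀ x y : A, x ≤ y ↔ c y ≤ c x)
    {j : A} (hj : CompletelyJoinIrreducible j) (y : A) :
    star c j ≤ y ↔ ¬ y ≤ c j := by
  constructor
  · intro h hy
    exact dm_star_not_le hdist c hinv hanti hj (h.trans hy)
  · intro hy
    exact sInf_le hy

theorem dm_star_cji [IsCompactlyGenerated A]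
    (hdist : ∀ x y z : A, x ⊓ (y ⊔ z) = (x ⊓ y) ⊔ (x ⊓ z))
    (c : A → A) (hinv : ∀ x, c (c x) = x) (hanti : ∀ x y : A, x ≤ y ↔ c y ≤ c x)
    {j : A} (hj : CompletelyJoinIrreducible j) :
    CompletelyJoinIrreducible (star c j) := by
  intro S hS
  have hns : ¬ sSup S ≤ c j := hS ▸ dm_star_not_le hdist c hinv hanti hj
  obtain ⟨s, hsS, hs⟩ : ∃ s ∈ S, ¬ s ≤ c j := by
    by_contra hc
    push_neg at hc
    exact hns (sSup_le hc)
  have h1 : star c j ≤ s := sInf_le hs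
  have h2 : s ≤ star c j := hS ▸ le_sSup hsS
  exact (le_antisymm h1 h2) ▸ hsS

end Aux

/-- If `φ` is an order-isomorphism between the completely join-irreducible elements
of two De Morgan algebras on algebraic lattices commuting with `*`, then
`Φ(x) = ⋁ φ(J(x))` is an isomorphism of De Morgan algebras. -/
theorem deMorgan_iso_of_joinIrreducible_iso
    {L K : Type*} [CompleteLattice L] [IsCompactlyGenerated L]
    [CompleteLattice K] [IsCompactlyGenerated K]
    (hdistL : ∀ x y z : L, x ⊓ (y ⊔ z) = (x ⊓ y) ⊔ (x ⊓ z))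
    (hdistK : ∀ x y z : K, x ⊓ (y ⊔ z) = (x ⊓ y) ⊔ (x ⊓ z))
    (cL : L → L) (hinvL : ∀ x, cL (cL x) = x)
    (hantiL : ∀ x y : L, x ≤ y ↔ cL y ≤ cL x)
    (cK : K → K) (hinvK : ∀ x, cK (cK x) = x)
    (hantiK : ∀ x y : K, x ≤ y ↔ cK y ≤ cK x)
    (φ : L → K)
    (hφmem : ∀ j : L, CompletelyJoinIrreducible j → CompletelyJoinIrreducible (φ j))
    (hφord : ∀ i j : L, CompletelyJoinIrreducible i → CompletelyJoinIrreducible j →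
      (i ≤ j ↔ φ i ≤ φ j))
    (hφsurj : ∀ k : K, CompletelyJoinIrreducible k →
      ∃ j : L, CompletelyJoinIrreducible j ∧ φ j = k)
    (hφstar : ∀ j : L, CompletelyJoinIrreducible j → φ (star cL j) = star cK (φ j)) :
    Function.Bijective (fun x : L => sSup (φ '' {j | CompletelyJoinIrreducible j ∧ j ≤ x})) ∧
    (∀ x y : L, x ≤ y ↔
      sSup (φ '' {j | CompletelyJoinIrreducible j ∧ j ≤ x}) ≤
        sSup (φ '' {j | CompletelyJoinIrreducible j ∧ j ≤ y})) ∧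
    (∀ x : L, sSup (φ '' {j | CompletelyJoinIrreducible j ∧ j ≤ cL x}) =
      cK (sSup (φ '' {j | CompletelyJoinIrreducible j ∧ j ≤ x}))) := by
  -- Key lemma: for completely join-irreducible j₀, `φ j₀ ≤ Φ z ↔ j₀ ≤ z`.
  have key : ∀ j₀ : L, CompletelyJoinIrreducible j₀ → ∀ z : L,
      (φ j₀ ≤ sSup (φ '' {j | CompletelyJoinIrreducible j ∧ j ≤ z}) ↔ j₀ ≤ z) := by
    intro j₀ hj₀ z
    constructor
    · intro h
      obtain ⟨_, ⟨j, ⟨hj, hjz⟩, rfl⟩, hle⟩ := dm_cji_prime hdistK (hφmem j₀ hj₀) h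
      exact ((hφord j₀ j hj₀ hj).mpr hle).trans hjz
    · intro h
      exact le_sSup ⟨j₀, ⟨hj₀, h⟩, rfl⟩
  -- order part
  have ord : ∀ x y : L, x ≤ y ↔
      sSup (φ '' {j | CompletelyJoinIrreducible j ∧ j ≤ x}) ≤
        sSup (φ '' {j | CompletelyJoinIrreducible j ∧ j ≤ y}) := by
    intro x y
    constructor
    · intro h
      exact sSup_le_sSup (Set.image_mono fun j hj => ⟨hj.1, hj.2.trans h⟩)
    · intro h
      conv_lhs => rw [dm_join_gen cL hinvL hantiL x]
      apply sSup_le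
      rintro j ⟨hj, hjx⟩
      have hmem : φ j ∈ φ '' {j' | CompletelyJoinIrreducible j' ∧ j' ≤ x} :=
        ⟨j, ⟨hj, hjx⟩, rfl⟩
      exact (key j hj y).mp ((le_sSup hmem).trans h)
  have hinj : Function.Injective
      (fun x : L => sSup (φ '' {j | CompletelyJoinIrreducible j ∧ j ≤ x})) := by
    intro a b hab
    simp only at hab
    exact le_antisymm ((ord a b).mpr hab.le) ((ord b a).mpr hab.ge)
  have hsurj : Function.Surjective
      (fun x : L => sSup (φ '' {j | CompletelyJoinIrreducible j ∧ j ≤ x})) := by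
    intro y
    refine ⟨sSup {j : L | CompletelyJoinIrreducible j ∧ φ j ≤ y}, ?_⟩
    dsimp only
    refine le_antisymm ?_ ?_
    · apply sSup_le
      rintro _ ⟨j, ⟨hj, hjx⟩, rfl⟩
      obtain ⟨j', ⟨hj', hj'y⟩, hle⟩ := dm_cji_prime hdistL hj hjx
      exact ((hφord j j' hj hj').mp hle).trans hj'y
    · conv_lhs => rw [dm_join_gen cK hinvK hantiK y]
      apply sSup_le
      rintro k ⟨hk, hky⟩
      obtain ⟨j, hj, rfl⟩ := hφsurj k hk
      refine le_sSup ⟨j, ⟨hj, ?_⟩, rfl⟩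
      exact le_sSup ⟨hj, hky⟩
  refine ⟨⟨hinj, hsurj⟩, ord, ?_⟩
  -- commuting with the involution
  intro x
  -- two elements of K are equal iff they dominate the same CJI elements
  have eqK : ∀ a b : K, (∀ k : K, CompletelyJoinIrreducible k → (k ≤ a ↔ k ≤ b)) → a = b := by
    intro a b h
    apply le_antisymm
    · conv_lhs => rw [dm_join_gen cK hinvK hantiK a]
      exact sSup_le fun k hk => (h k hk.1).mp hk.2
    · conv_lhs => rw [dm_join_gen cK hinvK hantiK b]
      exact sSup_le fun k hk => (h k hk.1).mpr hk.2
  apply eqK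
  intro k hk
  obtain ⟨j₀, hj₀, rfl⟩ := hφsurj k hk
  rw [key j₀ hj₀ (cL x)]
  have h1 : j₀ ≤ cL x ↔ x ≤ cL j₀ := dm_le_c_iff cL hinvL hantiL j₀ x
  have h2 : x ≤ cL j₀ ↔ ¬ star cL j₀ ≤ x :=
    ⟨fun h hs => dm_star_not_le hdistL cL hinvL hantiL hj₀ (hs.trans h),
     fun h => by
       by_contra hx
       exact h (sInf_le hx)⟩
  have h3 : φ j₀ ≤ cK (sSup (φ '' {j | CompletelyJoinIrreducible j ∧ j ≤ x})) ↔
      ¬ star cL j₀ ≤ x := by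
    rw [dm_le_c_iff cK hinvK hantiK]
    rw [← not_not (a := sSup (φ '' {j | CompletelyJoinIrreducible j ∧ j ≤ x}) ≤ cK (φ j₀))]
    rw [← dm_star_le_iff hdistK cK hinvK hantiK (hφmem j₀ hj₀)
      (sSup (φ '' {j | CompletelyJoinIrreducible j ∧ j ≤ x}))]
    rw [← hφstar j₀ hj₀]
    rw [key (star cL j₀) (dm_star_cji hdistL cL hinvL hantiL hj₀) x]
  rw [h1, h2, h3]
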